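/- Let π be a finitely generated free group, I the augmentation ideal of ℚ[π], and π̂ the set of group-like elements of the I-adic completion of ℚ[π], with filtration π̂_m = π̂ ∩ (1 + Î^m). Then the natural map π → π̂ is injective. -/

import Mathlib

/-- The augmentation homomorphism of the rational group algebra. -/
noncomputable def aug (G : Type*) [Group G] : MonoidAlgebra ℚ G →ₐ[ℚ] ℚ :=
  MonoidAlgebra.lift ℚ ℚ G 1

/-- The augmentation ideal `I = ker ε`. -/
noncomputable def augIdeal (G : Type*) [Group G] : Submodule ℚ (MonoidAlgebra ℚ G) :=
  LinearMap.ker (aug G).toLinearMap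


namespace MagnusAux

open MonoidAlgebra

abbrev FM (n : ℕ) := FreeMonoid (Fin n)
abbrev B (n : ℕ) := MonoidAlgebra ℚ (FM n)

/-- Submodule of elements supported on words of length ≥ N. -/
noncomputable def V (n N : ℕ) : Submodule ℚ (B n) where
  carrier := {f | ∀ w : FM n, (FreeMonoid.toList w).length < N → f.coeff w = 0}
  add_mem' := by
    intro f g hf hg w hw
    show f.coeff w + g.coeff w = 0
    rw [hf w hw, hg w hw, add_zero]
  zero_mem' := by intro w _; rfl
  smul_mem' := by
    intro c f hf w hw
    show c * f.coeff w = 0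
    rw [hf w hw, mul_zero]

lemma mem_V {n N : ℕ} {f : B n} :
    f ∈ V n N ↔ ∀ w : FM n, (FreeMonoid.toList w).length < N → f.coeff w = 0 := Iff.rfl

lemma mem_V_of_support {n N : ℕ} {f : B n}
    (h : ∀ w ∈ f.coeff.support, N ≤ (FreeMonoid.toList w).length) : f ∈ V n N := by
  rw [mem_V]
  intro w hw
  by_contra hne
  exact absurd (h w (Finsupp.mem_support_iff.mpr hne)) (Nat.not_le.mpr hw)

lemma V_antitone {n : ℕ} {N M : ℕ} (h : N ≤ M) : V n M ≤ V n N := by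
  intro f hf
  rw [mem_V] at hf ⊢
  exact fun w hw => hf w (lt_of_lt_of_le hw h)

lemma mul_mem_V {n a b : ℕ} {f g : B n} (hf : f ∈ V n a) (hg : g ∈ V n b) :
    f * g ∈ V n (a + b) := by
  classical
  apply mem_V_of_support
  intro w hw
  have hsub := MonoidAlgebra.support_coeff_mul_subset f g hw
  rcases Finset.mem_mul.mp hsub with ⟨u, hu, v, hv, rfl⟩
  have hu' : a ≤ (FreeMonoid.toList u).length := by
    by_contra h'
    exact absurd (mem_V.mp hf u (Nat.not_le.mp h')) (Finsupp.mem_support_iff.mp hu)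
  have hv' : b ≤ (FreeMonoid.toList v).length := by
    by_contra h'
    exact absurd (mem_V.mp hg v (Nat.not_le.mp h')) (Finsupp.mem_support_iff.mp hv)
  have : (FreeMonoid.toList (u * v)).length
      = (FreeMonoid.toList u).length + (FreeMonoid.toList v).length := by
    simp [FreeMonoid.toList_mul]
  rw [this]
  exact Nat.add_le_add hu' hv'

lemma mem_V_zero {n : ℕ} (f : B n) : f ∈ V n 0 := by
  rw [mem_V]; intro w hw; exact absurd hw (Nat.not_lt_zero _)

lemma mul_mem_V_left {n N : ℕ} (b : B n) {g : B n} (hg : g ∈ V n N) : b * g ∈ V n N := by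
  simpa using mul_mem_V (mem_V_zero b) hg

lemma mul_mem_V_right {n N : ℕ} {g : B n} (hg : g ∈ V n N) (b : B n) : g * b ∈ V n N := by
  simpa using mul_mem_V hg (mem_V_zero b)

/-- The truncated module. -/
abbrev Q (n N : ℕ) := B n ⧸ V n N

/-- Left regular representation on the truncation. -/
noncomputable def rho (n N : ℕ) : B n →ₐ[ℚ] Module.End ℚ (Q n N) where
  toFun b := Submodule.mapQ (V n N) (V n N) (LinearMap.mulLeft ℚ b)
    (show V n N ≤ (V n N).comap (LinearMap.mulLeft ℚ b) from fun g hg => mul_mem_V_left b hg)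
  map_one' := by
    apply Submodule.linearMap_qext
    refine LinearMap.ext fun x => ?_
    simp [Submodule.mapQ_apply]
  map_mul' a b := by
    apply Submodule.linearMap_qext
    refine LinearMap.ext fun x => ?_
    simp [Submodule.mapQ_apply, mul_assoc]
  map_zero' := by
    apply Submodule.linearMap_qext
    refine LinearMap.ext fun x => ?_
    simp [Submodule.mapQ_apply]
  map_add' a b := by
    apply Submodule.linearMap_qext
    refine LinearMap.ext fun x => ?_
    simp [Submodule.mapQ_apply, add_mul]
  commutes' q := by
    apply Submodule.linearMap_qext
    refine LinearMap.ext fun x => ?_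
    simp only [LinearMap.comp_apply, Submodule.mkQ_apply, Submodule.mapQ_apply,
      LinearMap.mulLeft_apply, Module.algebraMap_end_apply]
    rw [← Submodule.Quotient.mk_smul, Algebra.smul_def]

lemma rho_apply_mk {n N : ℕ} (b x : B n) :
    rho n N b (Submodule.Quotient.mk x) = Submodule.Quotient.mk (b * x) := by
  simp [rho, Submodule.mapQ_apply]

lemma rho_eq_zero {n N : ℕ} {b : B n} (hb : b ∈ V n N) : rho n N b = 0 := by
  apply Submodule.linearMap_qext
  refine LinearMap.ext fun x => ?_
  simp only [LinearMap.comp_apply, Submodule.mkQ_apply, rho_apply_mk, LinearMap.zero_comp,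
    LinearMap.zero_apply]
  rw [Submodule.Quotient.mk_eq_zero]
  exact mul_mem_V_right hb x


/-- Generalized binomial coefficient as a rational. -/
noncomputable def chi (e : ℤ) (c : ℕ) : ℚ := ((Ring.choose e c : ℤ) : ℚ)

lemma chi_zero_right (e : ℤ) : chi e 0 = 1 := by simp [chi, Ring.choose_zero_right]
lemma chi_one_right (e : ℤ) : chi e 1 = (e : ℚ) := by simp [chi, Ring.choose_one_right]
lemma chi_zero_left_pos {c : ℕ} (hc : 0 < c) : chi 0 c = 0 := by
  simp [chi, Ring.choose_zero_pos ℤ hc]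
lemma chi_pascal (e : ℤ) (c : ℕ) : chi (e + 1) (c + 1) = chi e c + chi e (c + 1) := by
  simp only [chi]
  rw [Ring.choose_succ_succ]
  push_cast
  ring

variable {n : ℕ}

/-- The generator `X i`. -/
noncomputable def XX (n : ℕ) (i : Fin n) : B n :=
  MonoidAlgebra.of ℚ (FM n) (FreeMonoid.of i)

lemma XX_pow (i : Fin n) (c : ℕ) :
    XX n i ^ c = MonoidAlgebra.single (FreeMonoid.of i ^ c) (1 : ℚ) := by
  rw [XX, ← map_pow]
  rfl

lemma toList_of_pow (i : Fin n) (c : ℕ) :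
    FreeMonoid.toList (FreeMonoid.of i ^ c) = List.replicate c i := by
  induction c with
  | zero => rfl
  | succ c ih =>
    rw [pow_succ', FreeMonoid.toList_mul, ih, FreeMonoid.toList_of]
    rfl

lemma XX_pow_mem_V (i : Fin n) (c : ℕ) : XX n i ^ c ∈ V n c := by
  apply mem_V_of_support
  intro w hw
  rw [XX_pow] at hw
  have := Finsupp.support_single_subset hw
  simp only [Finset.mem_singleton] at this
  subst this
  rw [toList_of_pow, List.length_replicate]

/-- Truncated binomial series `(1+X i)^e` up to degree `< t`. -/
noncomputable def ub (t : ℕ) (i : Fin n) (e : ℤ) : B n :=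
  ∑ c ∈ Finset.range t, chi e c • XX n i ^ c

lemma ub_zero (t : ℕ) (i : Fin n) : ub (t + 1) (i := i) 0 = 1 := by
  rw [ub, Finset.sum_eq_single_of_mem 0 (Finset.mem_range.mpr (Nat.succ_pos t))]
  · simp [chi_zero_right]
  · intro c _ hc
    rw [chi_zero_left_pos (Nat.pos_of_ne_zero hc), zero_smul]

lemma ub_mul_one_add (t : ℕ) (i : Fin n) (e : ℤ) :
    ub (t + 1) i e * (1 + XX n i)
      = ub (t + 1) i (e + 1) + chi e t • XX n i ^ (t + 1) := by
  induction t with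
  | zero =>
    simp [ub, Finset.sum_range_one, chi_zero_right]
  | succ t ih =>
    rw [show ub (t + 2) i e = ub (t + 1) i e + chi e (t + 1) • XX n i ^ (t + 1) from
        Finset.sum_range_succ _ _, add_mul, ih]
    rw [show ub (t + 2) i (e + 1) = ub (t + 1) i (e + 1) + chi (e + 1) (t + 2 - 1) •
        XX n i ^ (t + 1) from Finset.sum_range_succ _ _]
    have hp : chi (e + 1) (t + 1) = chi e t + chi e (t + 1) := chi_pascal e t
    have : chi e (t + 1) • XX n i ^ (t + 1) * (1 + XX n i)
        = chi e (t + 1) • XX n i ^ (t + 1) + chi e (t + 1) • XX n i ^ (t + 2) := by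
      rw [mul_add, mul_one, smul_mul_assoc, ← pow_succ]
    rw [this]
    show _ = ub (t + 1) i (e + 1) + chi (e + 1) (t + 1) • XX n i ^ (t + 1) +
      chi e (t + 1) • XX n i ^ (t + 2)
    rw [hp, add_smul]
    abel

lemma commute_ub (t : ℕ) (i : Fin n) (e : ℤ) : Commute (1 + XX n i) (ub t i e) := by
  apply Commute.add_left (Commute.one_left _)
  apply Finset.sum_induction _ (fun b => Commute (XX n i) b)
  · exact fun a b ha hb => ha.add_right hb
  · exact Commute.zero_right _
  · intro c _
    exact ((Commute.refl (XX n i)).pow_right c).smul_right _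

lemma rho_ub_mul (t : ℕ) (i : Fin n) (e : ℤ) :
    rho n (t + 1) (ub (t + 1) i e) * rho n (t + 1) (1 + XX n i)
      = rho n (t + 1) (ub (t + 1) i (e + 1)) := by
  rw [← map_mul, ub_mul_one_add]
  rw [map_add, map_smul]
  rw [rho_eq_zero (XX_pow_mem_V i (t + 1)), smul_zero, add_zero]

/-- The image of the generator `1 + X i` as a unit of the truncated algebra. -/
noncomputable def uu (t : ℕ) (i : Fin n) : (Module.End ℚ (Q n (t + 1)))ˣ where
  val := rho n (t + 1) (1 + XX n i)
  inv := rho n (t + 1) (ub (t + 1) i (-1))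
  val_inv := by
    have h := rho_ub_mul t i (-1)
    rw [neg_add_cancel, ub_zero, map_one] at h
    rw [← h]
    rw [← map_mul, ← map_mul, (commute_ub (t + 1) i (-1)).eq]
  inv_val := by
    have h := rho_ub_mul t i (-1)
    rw [neg_add_cancel, ub_zero, map_one] at h
    exact h

lemma uu_zpow (t : ℕ) (i : Fin n) (e : ℤ) :
    ((uu t i ^ e : (Module.End ℚ (Q n (t + 1)))ˣ) : Module.End ℚ (Q n (t + 1)))
      = rho n (t + 1) (ub (t + 1) i e) := by
  induction e using Int.induction_on with
  | zero => rw [zpow_zero, ub_zero, map_one]; rfl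
  | succ e ih =>
    rw [zpow_add_one, Units.val_mul, ih, ← rho_ub_mul t i e]
    rfl
  | pred e ih =>
    rw [zpow_sub_one, Units.val_mul, ih]
    have key : rho n (t + 1) (ub (t + 1) i (-(e : ℤ) - 1)) * (uu t i : Module.End ℚ (Q n (t+1)))
        = rho n (t + 1) (ub (t + 1) i (-(e : ℤ))) := by
      have := rho_ub_mul t i (-(e : ℤ) - 1)
      rw [sub_add_cancel] at this
      exact this
    calc rho n (t+1) (ub (t+1) i (-(e:ℤ))) * ((uu t i)⁻¹ : (Module.End ℚ (Q n (t+1)))ˣ)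
        = (rho n (t + 1) (ub (t + 1) i (-(e : ℤ) - 1)) * (uu t i : Module.End ℚ (Q n (t+1))))
          * ((uu t i)⁻¹ : (Module.End ℚ (Q n (t+1)))ˣ) := by rw [key]
      _ = rho n (t + 1) (ub (t + 1) i (-(e : ℤ) - 1)) := by
          rw [mul_assoc, Units.mul_inv, mul_one]


lemma one_apply_ne {v : FM n} (hv : v ≠ 1) : (1 : B n).coeff v = 0 := by
  rw [MonoidAlgebra.one_def]
  exact Finsupp.single_eq_of_ne hv

lemma single_mul_apply_eq (x v' : FM n) (P : B n) :
    (MonoidAlgebra.single x (1 : ℚ) * P).coeff (x * v') = P.coeff v' := by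
  rw [MonoidAlgebra.coeff_single_mul_eq_mul_coeff (x := P) v' (fun a _ => mul_right_inj x), one_mul]

lemma single_mul_apply_ne {x v : FM n} (P : B n)
    (h : ¬ FreeMonoid.toList x <+: FreeMonoid.toList v) :
    (MonoidAlgebra.single x (1 : ℚ) * P).coeff v = 0 := by
  classical
  by_contra hne
  have hv : v ∈ (MonoidAlgebra.single x (1 : ℚ) * P).coeff.support := Finsupp.mem_support_iff.mpr hne
  have hsub := MonoidAlgebra.support_coeff_mul_subset _ _ hv
  rcases Finset.mem_mul.mp hsub with ⟨u, hu, w, _, rfl⟩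
  have hx : u = x := by
    have := Finsupp.support_single_subset hu
    simpa using this
  subst hx
  exact h ⟨FreeMonoid.toList w, (FreeMonoid.toList_mul u w).symm⟩

/-- Product of truncated binomial series over a list of blocks. -/
noncomputable def prodUB (t : ℕ) (bs : List (Fin n × ℤ)) : B n :=
  (bs.map (fun b => ub (t + 1) b.1 b.2)).prod

lemma prodUB_nil (t : ℕ) : prodUB t ([] : List (Fin n × ℤ)) = 1 := rfl

lemma prodUB_cons (t : ℕ) (b : Fin n × ℤ) (bs : List (Fin n × ℤ)) :
    prodUB t (b :: bs) = ub (t + 1) b.1 b.2 * prodUB t bs := by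
  simp [prodUB]

lemma ub_mul_apply (t : ℕ) (i : Fin n) (e : ℤ) (P : B n) (v : FM n) :
    (ub (t + 1) i e * P).coeff v
      = ∑ c ∈ Finset.range (t + 1),
          chi e c * ((MonoidAlgebra.single (FreeMonoid.of i ^ c) (1 : ℚ) * P).coeff v) := by
  rw [ub, Finset.sum_mul]
  rw [MonoidAlgebra.coeff_sum, Finset.sum_apply']
  refine Finset.sum_congr rfl fun c _ => ?_
  rw [XX_pow, smul_mul_assoc, MonoidAlgebra.coeff_smul_apply, smul_eq_mul]

lemma chain'_replicate_append {c : ℕ} {i : Fin n} {rest : List (Fin n)}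
    (h : List.Chain' (· ≠ ·) (List.replicate c i ++ rest)) : c ≤ 1 := by
  by_contra hc
  push_neg at hc
  obtain ⟨c', rfl⟩ : ∃ c', c = c' + 2 := ⟨c - 2, by omega⟩
  have : List.Chain' (· ≠ ·) (List.replicate (c' + 2) i) :=
    h.prefix ⟨rest, rfl⟩
  rw [show List.replicate (c' + 2) i = i :: i :: List.replicate c' i from rfl] at this
  exact (List.isChain_cons_cons.mp this).1 rfl

lemma prodUB_apply_vanish (t : ℕ) (bs : List (Fin n × ℤ)) :
    ∀ v : FM n, List.Chain' (· ≠ ·) (FreeMonoid.toList v) →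
      bs.length < (FreeMonoid.toList v).length → (prodUB t bs).coeff v = 0 := by
  induction bs with
  | nil =>
    intro v _ hlen
    rw [prodUB_nil]
    apply one_apply_ne
    intro hv
    rw [hv] at hlen
    simp [FreeMonoid.toList_one] at hlen
  | cons b bs ih =>
    intro v hch hlen
    obtain ⟨i, e⟩ := b
    rw [prodUB_cons, ub_mul_apply]
    apply Finset.sum_eq_zero
    intro c _
    by_cases hpre : FreeMonoid.toList (FreeMonoid.of i ^ c) <+: FreeMonoid.toList v
    · obtain ⟨rest, hrest⟩ := hpre
      rw [toList_of_pow] at hrest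
      have hc : c ≤ 1 := chain'_replicate_append (by rw [hrest]; exact hch)
      have hv : v = FreeMonoid.of i ^ c * FreeMonoid.ofList rest := by
        apply FreeMonoid.toList.injective
        rw [FreeMonoid.toList_mul, toList_of_pow, FreeMonoid.toList_ofList]
        exact hrest.symm
      rw [hv, single_mul_apply_eq]
      have hlenrest : bs.length < rest.length := by
        have hl := congrArg List.length hrest
        simp only [List.length_append, List.length_replicate] at hl
        simp only [List.length_cons] at hlen
        omega
      have hchrest : List.Chain' (· ≠ ·) rest :=
        hch.suffix ⟨List.replicate c i, hrest⟩
      rw [ih (FreeMonoid.ofList rest) (by rw [FreeMonoid.toList_ofList]; exact hchrest)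
        (by rw [FreeMonoid.toList_ofList]; exact hlenrest), mul_zero]
    · rw [single_mul_apply_ne _ hpre, mul_zero]

lemma prodUB_apply_main (t : ℕ) (ht : 1 ≤ t) (bs : List (Fin n × ℤ))
    (hch : List.Chain' (fun p q => p.1 ≠ q.1) bs) :
    (prodUB t bs).coeff (FreeMonoid.ofList (bs.map Prod.fst))
      = (bs.map (fun b => (b.2 : ℚ))).prod := by
  induction bs with
  | nil => simp [prodUB_nil, MonoidAlgebra.one_def, FreeMonoid.ofList_nil]
  | cons b bs ih =>
    obtain ⟨i, e⟩ := b
    rw [prodUB_cons, ub_mul_apply]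
    have hchmap : List.Chain' (· ≠ ·) ((((i, e) : Fin n × ℤ) :: bs).map Prod.fst) :=
      (List.isChain_map Prod.fst).mpr hch
    rw [Finset.sum_eq_single_of_mem 1 (Finset.mem_range.mpr (by omega))]
    · -- main term c = 1
      have heq : FreeMonoid.ofList ((((i, e) : Fin n × ℤ) :: bs).map Prod.fst)
          = FreeMonoid.of i ^ 1 * FreeMonoid.ofList (bs.map Prod.fst) := by
        apply FreeMonoid.toList.injective
        rw [FreeMonoid.toList_mul, toList_of_pow, FreeMonoid.toList_ofList,
          FreeMonoid.toList_ofList]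
        rfl
      rw [heq, single_mul_apply_eq, chi_one_right, ih hch.tail]
      simp
    · -- other terms vanish
      intro c _ hc1
      by_cases hpre : FreeMonoid.toList (FreeMonoid.of i ^ c)
          <+: FreeMonoid.toList (FreeMonoid.ofList ((((i, e) : Fin n × ℤ) :: bs).map Prod.fst))
      · obtain ⟨rest, hrest⟩ := hpre
        rw [toList_of_pow, FreeMonoid.toList_ofList] at hrest
        have hc : c ≤ 1 := chain'_replicate_append (by rw [hrest]; exact hchmap)
        interval_cases c
        · -- c = 0 : vanishing by length
          rw [pow_zero, ← MonoidAlgebra.one_def, one_mul]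
          rw [prodUB_apply_vanish t bs _ (by
              rw [FreeMonoid.toList_ofList]; exact hchmap)
            (by rw [FreeMonoid.toList_ofList]; simp), mul_zero]
        · exact absurd rfl hc1
      · rw [single_mul_apply_ne _ hpre, mul_zero]
        

/-! ### Block decomposition of reduced words -/

/-- The exponent of a letter. -/
def dd (b : Bool) : ℤ := cond b 1 (-1)

/-- Group a word (list of letters with signs) into blocks with integer exponents. -/
def blk : List (Fin n × Bool) → List (Fin n × ℤ)
  | [] => []
  | (i, b) :: t =>
    match blk t with
    | [] => [(i, dd b)]
    | (i', e) :: bs =>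
      if i' = i ∧ (if b then 0 < e else e < 0) then (i, e + dd b) :: bs
      else (i, dd b) :: (i', e) :: bs

lemma of_eq_mk (i : Fin n) : FreeGroup.of i = FreeGroup.mk [(i, true)] := rfl

lemma mk_single_zpow (i : Fin n) (b : Bool) :
    FreeGroup.mk [(i, b)] = FreeGroup.of i ^ (dd b) := by
  cases b
  · show FreeGroup.mk [(i, false)] = FreeGroup.of i ^ (-1 : ℤ)
    rw [zpow_neg, zpow_one, of_eq_mk, FreeGroup.inv_mk]
    simp [FreeGroup.invRev]
  · show FreeGroup.mk [(i, true)] = FreeGroup.of i ^ (1 : ℤ)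
    rw [zpow_one, of_eq_mk]

lemma blk_cons (i : Fin n) (b : Bool) (t : List (Fin n × Bool)) :
    blk ((i, b) :: t) = (match blk t with
      | [] => [(i, dd b)]
      | (i', e) :: bs =>
        if i' = i ∧ (if b then 0 < e else e < 0) then (i, e + dd b) :: bs
        else (i, dd b) :: (i', e) :: bs) := rfl

lemma blk_prod : ∀ l : List (Fin n × Bool),
    FreeGroup.mk l = ((blk l).map (fun b => FreeGroup.of b.1 ^ b.2)).prod := by
  intro l
  induction l with
  | nil => rfl
  | cons p t ih =>
    obtain ⟨i, b⟩ := p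
    have hcons : FreeGroup.mk ((i, b) :: t) = FreeGroup.of i ^ (dd b) * FreeGroup.mk t := by
      rw [← mk_single_zpow, FreeGroup.mul_mk]
      rfl
    rw [hcons, ih]
    show _ = ((blk ((i, b) :: t)).map (fun b => FreeGroup.of b.1 ^ b.2)).prod
    cases hbt : blk t with
    | nil => simp [blk, hbt]
    | cons b' bs =>
      obtain ⟨i', e⟩ := b'
      by_cases hcond : i' = i ∧ (if b then 0 < e else e < 0)
      · rw [show blk ((i, b) :: t) = (i, e + dd b) :: bs by
          rw [blk_cons, hbt]; exact if_pos hcond]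
        simp only [List.map_cons, List.prod_cons, ← mul_assoc, hcond.1]
        rw [← zpow_add, add_comm]
      · rw [show blk ((i, b) :: t) = (i, dd b) :: (i', e) :: bs by
          rw [blk_cons, hbt]; exact if_neg hcond]
        simp [List.map_cons, List.prod_cons]

/-- Head invariant for the block decomposition. -/
def headInv : List (Fin n × Bool) → List (Fin n × ℤ) → Prop
  | [], bl => bl = []
  | (i, b) :: _, bl => ∃ e bs, bl = (i, e) :: bs ∧ (if b then 0 < e else e < 0)

lemma blk_spec : ∀ l : List (Fin n × Bool),
    List.Chain' (fun p q => p.1 = q.1 → p.2 = q.2) l →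
    List.Chain' (fun p q : Fin n × ℤ => p.1 ≠ q.1) (blk l) ∧
      (∀ b ∈ blk l, b.2 ≠ 0) ∧ headInv l (blk l) := by
  intro l
  induction l with
  | nil => intro _; exact ⟨List.isChain_nil, by simp [blk], rfl⟩
  | cons p t ih =>
    intro hch
    obtain ⟨i, b⟩ := p
    obtain ⟨C, NZ, HI⟩ := ih hch.tail
    cases hbt : blk t with
    | nil =>
      have hblk : blk ((i, b) :: t) = [(i, dd b)] := by rw [blk_cons, hbt]
      refine ⟨by rw [hblk]; exact List.isChain_singleton _, ?_, ?_⟩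
      · intro x hx
        rw [hblk, List.mem_singleton] at hx
        subst hx
        cases b <;> simp [dd]
      · rw [hblk]
        exact ⟨dd b, [], rfl, by cases b <;> simp [dd]⟩
    | cons b' bs =>
      obtain ⟨i', e⟩ := b'
      -- t is nonempty
      have ht : t ≠ [] := by
        intro h
        rw [h] at HI
        rw [h] at hbt
        exact absurd (HI.symm.trans hbt) (by simp)
      obtain ⟨⟨j, b''⟩, t', rfl⟩ : ∃ p t', t = p :: t' := by
        cases t with
        | nil => exact absurd rfl ht
        | cons p t' => exact ⟨p, t', rfl⟩
      obtain ⟨e0, bs0, hbl0, hsign0⟩ := HI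
      rw [hbt] at hbl0
      simp only [List.cons.injEq, Prod.mk.injEq] at hbl0
      obtain ⟨⟨rfl, rfl⟩, rfl⟩ := hbl0
      -- now `blk t = (i', e) :: bs` with sign of `e` matching `b''`
      by_cases hcond : i' = i ∧ (if b then 0 < e else e < 0)
      · -- merge case
        have hblk : blk ((i, b) :: (i', b'') :: t') = (i, e + dd b) :: bs := by
          rw [blk_cons, hbt]; exact if_pos hcond
        obtain ⟨rfl, hsign⟩ := hcond
        have hnz : e + dd b ≠ 0 ∧ (if b then 0 < e + dd b else e + dd b < 0) := by
          cases b <;> simp [dd] at hsign ⊢ <;> omega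
        refine ⟨?_, ?_, ?_⟩
        · rw [hblk]
          rw [hbt] at C
          unfold List.Chain' at C ⊢
          rw [List.isChain_cons] at C ⊢
          exact ⟨C.1, C.2⟩
        · intro x hx
          rw [hblk] at hx
          rcases List.mem_cons.mp hx with rfl | hx
          · exact hnz.1
          · exact NZ x (by rw [hbt]; exact List.mem_cons_of_mem _ hx)
        · rw [hblk]
          exact ⟨e + dd b, bs, rfl, hnz.2⟩
      · -- no-merge case
        have hblk : blk ((i, b) :: (i', b'') :: t') = (i, dd b) :: (i', e) :: bs := by
          rw [blk_cons, hbt]; exact if_neg hcond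
        have hne : i ≠ i' := by
          intro h
          subst h
          have hb : b'' = b := ((List.isChain_cons_cons.mp hch).1 rfl).symm
          subst hb
          exact hcond ⟨rfl, hsign0⟩
        refine ⟨?_, ?_, ?_⟩
        · rw [hblk]
          unfold List.Chain'
          rw [List.isChain_cons_cons]
          exact ⟨hne, by rw [← hbt]; exact C⟩
        · intro x hx
          rw [hblk] at hx
          rcases List.mem_cons.mp hx with rfl | hx
          · cases b <;> simp [dd]
          · exact NZ x (by rw [hbt]; exact hx)
        · rw [hblk]
          exact ⟨dd b, _, rfl, by cases b <;> simp [dd]⟩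
    

/-! ### Reduced words -/

lemma chain'_of_no_bad {α : Type*} {P : α → α → Prop} :
    ∀ l : List α, (∀ l1 (a b : α) l2, l = l1 ++ a :: b :: l2 → P a b) → List.Chain' P l
  | [], _ => List.isChain_nil
  | [_], _ => List.isChain_singleton _
  | a :: b :: t, h => by
    unfold List.Chain'
    rw [List.isChain_cons_cons]
    refine ⟨h [] a b t rfl, chain'_of_no_bad (b :: t) fun l1 x y l2 hl => ?_⟩
    exact h (a :: l1) x y l2 (by rw [hl]; rfl)

lemma toWord_chain (z : FreeGroup (Fin n)) :
    List.Chain' (fun p q : Fin n × Bool => p.1 = q.1 → p.2 = q.2) z.toWord := by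
  apply chain'_of_no_bad
  intro l1 a b l2 hl hab
  by_contra hne
  have hb : b = (a.1, !a.2) := by
    obtain ⟨a1, a2⟩ := a; obtain ⟨b1, b2⟩ := b
    simp only at hab hne ⊢
    cases a2 <;> cases b2 <;> simp_all
  rw [hb] at hl
  have : FreeGroup.reduce z.toWord = l1 ++ (a.1, a.2) :: (a.1, !a.2) :: l2 := by
    rw [FreeGroup.reduce_toWord]
    rw [hl]
  exact FreeGroup.reduce.not this

/-! ### The augmentation ideal is spanned by `g - 1` -/

lemma augIdeal_le_span (G : Type*) [Group G] :
    augIdeal G ≤ Submodule.span ℚ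
      (Set.range (fun g : G => (MonoidAlgebra.of ℚ G g : MonoidAlgebra ℚ G) - 1)) := by
  intro f hf
  have hker : aug G f = 0 := hf
  have haug : aug G f = f.coeff.sum fun _ c => c := by
    conv_lhs => rw [← MonoidAlgebra.sum_coeff_single f]
    rw [map_finsuppSum]
    refine Finsupp.sum_congr fun g _ => ?_
    show aug G (MonoidAlgebra.single g _) = _
    rw [aug, MonoidAlgebra.lift_single]
    simp
  have hrep : f = (f.coeff.sum fun g c => c • ((MonoidAlgebra.of ℚ G g : MonoidAlgebra ℚ G) - 1))
      + (f.coeff.sum fun _ c => c) • (1 : MonoidAlgebra ℚ G) := by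
    rw [Finsupp.sum, Finsupp.sum, Finset.sum_smul, ← Finset.sum_add_distrib]
    conv_lhs => rw [← MonoidAlgebra.sum_coeff_single f, Finsupp.sum]
    refine Finset.sum_congr rfl fun g _ => ?_
    rw [smul_sub, sub_add_cancel]
    simp [MonoidAlgebra.of_apply, Finsupp.smul_single]
  rw [← haug, hker, zero_smul, add_zero] at hrep
  rw [hrep]
  refine Submodule.sum_mem _ fun g _ => Submodule.smul_mem _ _ ?_
  exact Submodule.subset_span ⟨g, rfl⟩

/-! ### The Magnus homomorphism at level `t+1` -/

variable (t : ℕ)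

/-- The Magnus group homomorphism. -/
noncomputable def phi (n t : ℕ) : FreeGroup (Fin n) →* (Module.End ℚ (Q n (t + 1)))ˣ :=
  FreeGroup.lift fun i => uu t i

/-- The Magnus algebra homomorphism. -/
noncomputable def Phi (n t : ℕ) :
    MonoidAlgebra ℚ (FreeGroup (Fin n)) →ₐ[ℚ] Module.End ℚ (Q n (t + 1)) :=
  MonoidAlgebra.lift ℚ _ (FreeGroup (Fin n)) ((Units.coeHom _).comp (phi n t))

lemma Phi_of (g : FreeGroup (Fin n)) :
    Phi n t (MonoidAlgebra.of ℚ (FreeGroup (Fin n)) g)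
      = ((phi n t g : (Module.End ℚ (Q n (t + 1)))ˣ) : Module.End ℚ (Q n (t + 1))) := by
  rw [Phi, MonoidAlgebra.lift_of]
  rfl

/-- The image of degree ≥ 1 elements. -/
noncomputable def W (n t : ℕ) : Submodule ℚ (Module.End ℚ (Q n (t + 1))) :=
  Submodule.map (rho n (t + 1)).toLinearMap (V n 1)

lemma W_mul {x y : Module.End ℚ (Q n (t + 1))} (hx : x ∈ W n t) (hy : y ∈ W n t) :
    x * y ∈ W n t := by
  obtain ⟨a, ha, rfl⟩ := hx
  obtain ⟨b, hb, rfl⟩ := hy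
  exact ⟨a * b, V_antitone (by norm_num) (mul_mem_V ha hb),
    by simp only [AlgHom.toLinearMap_apply, map_mul]⟩

lemma ub_sub_one_mem (i : Fin n) (e : ℤ) : ub (t + 1) i e - 1 ∈ V n 1 := by
  rw [ub, Finset.sum_range_succ']
  simp only [pow_zero, chi_zero_right, one_smul]
  rw [add_sub_cancel_right]
  refine Submodule.sum_mem _ fun c _ => Submodule.smul_mem _ _ ?_
  exact V_antitone (by omega) (XX_pow_mem_V i (c + 1))

lemma phi_sub_one_mem (g : FreeGroup (Fin n)) :
    ((phi n t g : _) : Module.End ℚ (Q n (t + 1))) - 1 ∈ W n t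
      ∧ (((phi n t g)⁻¹ : _) : Module.End ℚ (Q n (t + 1))) - 1 ∈ W n t := by
  induction g using FreeGroup.induction_on with
  | C1 => rw [map_one]; constructor <;> simp [Submodule.zero_mem]
  | of i =>
    have h1 : phi n t (FreeGroup.of i) = uu t i := FreeGroup.lift_apply_of
    rw [h1]
    constructor
    · refine ⟨XX n i, by simpa using XX_pow_mem_V i 1, ?_⟩
      show rho n (t + 1) (XX n i) = (uu t i : Module.End ℚ (Q n (t+1))) - 1
      rw [show ((uu t i : _) : Module.End ℚ (Q n (t+1))) = rho n (t+1) (1 + XX n i) from rfl]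
      rw [← map_one (rho n (t+1)), ← map_sub, add_sub_cancel_left]
    · refine ⟨ub (t + 1) i (-1) - 1, ub_sub_one_mem t i (-1), ?_⟩
      show rho n (t + 1) _ = _
      rw [map_sub, map_one]
      rfl
  | inv_of i ih =>
    rw [map_inv]
    exact ⟨ih.2, by rw [inv_inv]; exact ih.1⟩
  | mul x y ihx ihy =>
    rw [map_mul]
    have key : ∀ u v : (Module.End ℚ (Q n (t + 1)))ˣ,
        (u : Module.End ℚ (Q n (t + 1))) - 1 ∈ W n t →
        (v : Module.End ℚ (Q n (t + 1))) - 1 ∈ W n t →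
        ((u * v : (Module.End ℚ (Q n (t + 1)))ˣ) : Module.End ℚ (Q n (t + 1))) - 1 ∈ W n t := by
      intro u v hu hv
      have heq : ((u * v : (Module.End ℚ (Q n (t + 1)))ˣ) : Module.End ℚ (Q n (t + 1))) - 1
          = ((u : Module.End ℚ (Q n (t + 1))) - 1) * ((v : Module.End ℚ (Q n (t + 1))) - 1)
            + ((u : Module.End ℚ (Q n (t + 1))) - 1)
            + ((v : Module.End ℚ (Q n (t + 1))) - 1) := by
        rw [Units.val_mul]
        simp only [sub_mul, mul_sub, mul_one, one_mul]
        abel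
      rw [heq]
      exact add_mem (add_mem (W_mul t hu hv) hu) hv
    refine ⟨key _ _ ihx.1 ihy.1, ?_⟩
    rw [mul_inv_rev]
    exact key _ _ ihy.2 ihx.2

lemma V_one_pow (m : ℕ) : (V n 1) ^ (m + 1) ≤ V n (m + 1) := by
  induction m with
  | zero => rw [pow_one]
  | succ m ih =>
    rw [pow_succ]
    refine le_trans (mul_le_mul' ih (le_refl (V n 1))) ?_
    rw [Submodule.mul_le]
    intro a ha b hb
    exact mul_mem_V ha hb

lemma Phi_vanish (m : ℕ) {a : MonoidAlgebra ℚ (FreeGroup (Fin n))}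
    (ha : a ∈ (augIdeal (FreeGroup (Fin n))) ^ (m + 1)) : Phi n m a = 0 := by
  have h1 : Submodule.map (Phi n m).toLinearMap (augIdeal (FreeGroup (Fin n))) ≤ W n m := by
    refine le_trans (Submodule.map_mono (augIdeal_le_span _)) ?_
    rw [Submodule.map_span]
    rw [Submodule.span_le]
    rintro x ⟨y, ⟨g, rfl⟩, rfl⟩
    show Phi n m (MonoidAlgebra.of ℚ (FreeGroup (Fin n)) g - 1) ∈ W n m
    rw [map_sub, map_one, Phi_of]
    exact (phi_sub_one_mem m g).1
  have h2 : Submodule.map (Phi n m).toLinearMap ((augIdeal (FreeGroup (Fin n))) ^ (m + 1))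
      ≤ W n m ^ (m + 1) := by
    rw [Submodule.map_pow]
    exact pow_le_pow_left' h1 (m + 1)
  have h3 : W n m ^ (m + 1) ≤ ⊥ := by
    have : W n m ^ (m + 1) = Submodule.map (rho n (m + 1)).toLinearMap ((V n 1) ^ (m + 1)) := by
      rw [W, Submodule.map_pow]
    rw [this]
    rintro x ⟨a, ha, rfl⟩
    have : a ∈ V n (m + 1) := V_one_pow m ha
    simp only [Submodule.mem_bot]
    exact rho_eq_zero this
  have : Phi n m a ∈ (⊥ : Submodule ℚ (Module.End ℚ (Q n (m + 1)))) :=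
    h3 (h2 ⟨a, ha, rfl⟩)
  simpa using this

end MagnusAux

/-- For a finitely generated free group `π`, the natural map from `π` to the Malcev
completion `π̂` (the group-likes of the `I`-adic completion `lim← ℚ[π]/I^m`) is injective:
the composite of `π → ℚ[π]` with the projections to all quotients `ℚ[π]/I^m` is injective. -/
theorem free_group_to_malcev_injective (n : ℕ) :
    Function.Injective (fun x : FreeGroup (Fin n) =>
      fun m : ℕ =>
        Submodule.Quotient.mk (p := (augIdeal (FreeGroup (Fin n))) ^ (m + 1))
          (MonoidAlgebra.of ℚ (FreeGroup (Fin n)) x)) := by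
  classical
  intro x y h
  by_contra hne
  set z : FreeGroup (Fin n) := x * y⁻¹ with hzdef
  have hz : z ≠ 1 := by
    rw [hzdef]
    intro h1
    exact hne (mul_inv_eq_one.mp h1)
  have hl : z.toWord ≠ [] := fun h0 => hz (FreeGroup.toWord_eq_nil_iff.mp h0)
  obtain ⟨C, NZ, HI⟩ := MagnusAux.blk_spec z.toWord (MagnusAux.toWord_chain z)
  set bs := MagnusAux.blk z.toWord with hbsdef
  set k := bs.length with hkdef
  have hk : 1 ≤ k := by
    cases hlc : z.toWord with
    | nil => exact absurd hlc hl
    | cons p t =>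
      obtain ⟨i, b⟩ := p
      rw [hlc] at HI
      obtain ⟨e, bs', hbs', _⟩ := HI
      rw [hkdef, hbs']
      simp
  -- the difference lies in a deep power of the augmentation ideal
  have h' : Submodule.Quotient.mk (p := (augIdeal (FreeGroup (Fin n))) ^ (k + 1))
        (MonoidAlgebra.of ℚ (FreeGroup (Fin n)) x)
      = Submodule.Quotient.mk (p := (augIdeal (FreeGroup (Fin n))) ^ (k + 1))
        (MonoidAlgebra.of ℚ (FreeGroup (Fin n)) y) := congrFun h k
  have hsub : MonoidAlgebra.of ℚ (FreeGroup (Fin n)) x - MonoidAlgebra.of ℚ (FreeGroup (Fin n)) y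
      ∈ (augIdeal (FreeGroup (Fin n))) ^ (k + 1) := (Submodule.Quotient.eq _).mp h'
  have hzdiff : (MonoidAlgebra.of ℚ (FreeGroup (Fin n)) z : MonoidAlgebra ℚ (FreeGroup (Fin n)))
        - 1
      = (MonoidAlgebra.of ℚ (FreeGroup (Fin n)) x - MonoidAlgebra.of ℚ (FreeGroup (Fin n)) y)
        * MonoidAlgebra.of ℚ (FreeGroup (Fin n)) y⁻¹ := by
    rw [sub_mul, ← map_mul, ← map_mul, hzdef, mul_inv_cancel, map_one]
  have hrmul : ∀ a ∈ (augIdeal (FreeGroup (Fin n))) ^ (k + 1),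
      ∀ r : MonoidAlgebra ℚ (FreeGroup (Fin n)),
      a * r ∈ (augIdeal (FreeGroup (Fin n))) ^ (k + 1) := by
    intro a ha r
    rw [pow_succ] at ha ⊢
    refine Submodule.mul_induction_on ha (fun m hm c hc => ?_) (fun a b ha hb => ?_)
    · rw [mul_assoc]
      refine Submodule.mul_mem_mul hm ?_
      have hc0 : aug (FreeGroup (Fin n)) c = 0 := hc
      show aug (FreeGroup (Fin n)) (c * r) = 0
      rw [map_mul, hc0, zero_mul]
    · rw [add_mul]
      exact add_mem ha hb
  have hdelta : (MonoidAlgebra.of ℚ (FreeGroup (Fin n)) z : MonoidAlgebra ℚ (FreeGroup (Fin n)))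
      - 1 ∈ (augIdeal (FreeGroup (Fin n))) ^ (k + 1) := by
    rw [hzdiff]
    exact hrmul _ hsub _
  -- apply the Magnus homomorphism at level k+1
  have hPhi0 : MagnusAux.Phi n k
      ((MonoidAlgebra.of ℚ (FreeGroup (Fin n)) z : MonoidAlgebra ℚ (FreeGroup (Fin n))) - 1)
      = 0 := MagnusAux.Phi_vanish k hdelta
  have hone : ((MagnusAux.phi n k z : (Module.End ℚ (MagnusAux.Q n (k + 1)))ˣ)
      : Module.End ℚ (MagnusAux.Q n (k + 1))) = 1 := by
    rw [← MagnusAux.Phi_of]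
    rw [map_sub, map_one] at hPhi0
    exact sub_eq_zero.mp hPhi0
  -- compute the Magnus image via the block decomposition
  have hz2 : z = (bs.map (fun b => FreeGroup.of b.1 ^ b.2)).prod := by
    conv_lhs => rw [← FreeGroup.mk_toWord (x := z)]
    exact MagnusAux.blk_prod z.toWord
  have hphiz : MagnusAux.phi n k z
      = (bs.map (fun b => MagnusAux.uu k b.1 ^ b.2)).prod := by
    rw [hz2, map_list_prod, List.map_map]
    refine congrArg List.prod (List.map_congr_left fun b _ => ?_)
    show MagnusAux.phi n k (FreeGroup.of b.1 ^ b.2) = _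
    rw [map_zpow,
      show MagnusAux.phi n k (FreeGroup.of b.1) = MagnusAux.uu k b.1 from FreeGroup.lift_apply_of]
  have hcoe : ((MagnusAux.phi n k z : (Module.End ℚ (MagnusAux.Q n (k + 1)))ˣ)
      : Module.End ℚ (MagnusAux.Q n (k + 1)))
      = MagnusAux.rho n (k + 1) (MagnusAux.prodUB k bs) := by
    rw [hphiz]
    rw [show ((((bs.map (fun b => MagnusAux.uu k b.1 ^ b.2)).prod :
        (Module.End ℚ (MagnusAux.Q n (k + 1)))ˣ)) : Module.End ℚ (MagnusAux.Q n (k + 1)))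
        = (Units.coeHom _) ((bs.map (fun b => MagnusAux.uu k b.1 ^ b.2)).prod) from rfl]
    rw [map_list_prod, List.map_map]
    rw [MagnusAux.prodUB, map_list_prod, List.map_map]
    refine congrArg List.prod (List.map_congr_left fun b _ => ?_)
    exact MagnusAux.uu_zpow k b.1 b.2
  have hrho1 : MagnusAux.rho n (k + 1) (MagnusAux.prodUB k bs) = 1 := by
    rw [← hcoe]; exact hone
  -- the coefficient functional at the word of block letters
  set w : MagnusAux.FM n := FreeMonoid.ofList (bs.map Prod.fst) with hwdef
  have hwlen : (FreeMonoid.toList w).length = k := by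
    rw [hwdef, FreeMonoid.toList_ofList, List.length_map]
  have hker : MagnusAux.V n (k + 1) ≤ LinearMap.ker ((Finsupp.lapply (M := ℚ) (R := ℚ) w) ∘ₗ (MonoidAlgebra.coeffLinearEquiv ℚ).toLinearMap) := by
    intro v hv
    have := MagnusAux.mem_V.mp hv w (by rw [hwlen]; omega)
    simpa [Finsupp.lapply] using this
  set cw : MagnusAux.Q n (k + 1) →ₗ[ℚ] ℚ :=
    Submodule.liftQ (MagnusAux.V n (k + 1)) ((Finsupp.lapply w) ∘ₗ (MonoidAlgebra.coeffLinearEquiv ℚ).toLinearMap) hker with hcwdef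
  have heval : cw (MagnusAux.rho n (k + 1) (MagnusAux.prodUB k bs)
      (Submodule.Quotient.mk (1 : MagnusAux.B n)))
      = (MagnusAux.prodUB k bs).coeff w := by
    rw [MagnusAux.rho_apply_mk, mul_one, hcwdef, Submodule.liftQ_apply]
    rfl
  have hmain : (MagnusAux.prodUB k bs).coeff w
      = (bs.map (fun b => (b.2 : ℚ))).prod :=
    MagnusAux.prodUB_apply_main k hk bs C
  have hne0 : (bs.map (fun b => (b.2 : ℚ))).prod ≠ 0 := by
    apply List.prod_ne_zero
    intro hmem
    obtain ⟨b, hb, hb0⟩ := List.mem_map.mp hmem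
    exact NZ b hb (by exact_mod_cast hb0)
  have hzero : cw ((1 : Module.End ℚ (MagnusAux.Q n (k + 1)))
      (Submodule.Quotient.mk (1 : MagnusAux.B n))) = 0 := by
    show cw (Submodule.Quotient.mk (1 : MagnusAux.B n)) = 0
    rw [hcwdef, Submodule.liftQ_apply]
    show (1 : MagnusAux.B n).coeff w = 0
    apply MagnusAux.one_apply_ne
    intro hw1
    have hlen0 : (FreeMonoid.toList w).length = 0 := by rw [hw1]; rfl
    omega
  rw [hrho1] at heval
  rw [hzero] at heval
  rw [hmain] at heval
  exact hne0 heval.symm
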